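/- Let f : ℝ → ℝ be continuous with an m-orbit B, m > 2. For every r with 1 ≤ r ≤ m−1: (a) there exists r'' with r'' ≠ r and J_r → J_{r''}; (b) there exists r' with J_{r'} → J_r; (c) if it is not the case that m is even and 2r = m, then r' in (b) can be chosen with r' ≠ r. -/

import Mathlib

/-- `x` is a periodic point of `f` of (exact) period `n`. -/
def PeriodicPtOfPeriod (f : ℝ → ℝ) (n : ℕ) (x : ℝ) : Prop :=
  f^[n] x = x ∧ ∀ j, 1 ≤ j → j < n → f^[j] x ≠ x

/-- `β 1 < β 2 < ⋯ < β m` is an `m`-orbit of `f` with permutation `σ`: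
each `β t` is a periodic point of period `m`, `σ` permutes `{1,…,m}`,
and `f (β t) = β (σ t)`. -/
def IsOrbitWithPerm (f : ℝ → ℝ) (m : ℕ) (β : ℕ → ℝ) (σ : ℕ → ℕ) : Prop :=
  StrictMonoOn β (Set.Icc 1 m) ∧
  (∀ t ∈ Set.Icc 1 m, PeriodicPtOfPeriod f m (β t)) ∧
  Set.BijOn σ (Set.Icc 1 m) (Set.Icc 1 m) ∧
  (∀ t ∈ Set.Icc 1 m, f (β t) = β (σ t))

/-- The digraph of an orbit with permutation `σ` has an edge `J i → J s`,
i.e. `J s ⊆ <f (β i), f (β (i+1))>`. -/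
def HasEdge (σ : ℕ → ℕ) (i s : ℕ) : Prop :=
  min (σ i) (σ (i+1)) ≤ s ∧ s + 1 ≤ max (σ i) (σ (i+1))

/-- Discrete intermediate value: if `P a` and `¬ P b` with `a ≤ b`, then
somewhere between them `P` switches from true to false. -/
lemma cross_lemma (P : ℕ → Prop) : ∀ b a, a ≤ b → P a → ¬ P b →
    ∃ s, a ≤ s ∧ s < b ∧ P s ∧ ¬ P (s+1) := by
  intro b
  induction b with
  | zero =>
    intro a ha hPa hPb
    have : a = 0 := Nat.le_zero.mp ha
    exact absurd (this ▸ hPa) hPb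
  | succ b ih =>
    intro a ha hPa hPb
    have hab : a ≤ b := by
      rcases Nat.lt_or_ge a (b+1) with h | h
      · omega
      · have : a = b + 1 := by omega
        exact absurd (this ▸ hPa) hPb
    by_cases hb : P b
    · exact ⟨b, hab, Nat.lt_succ_self b, hb, hPb⟩
    · obtain ⟨s, h1, h2, h3, h4⟩ := ih a hab hPa hb
      exact ⟨s, h1, by omega, h3, h4⟩

/-- If `P` never switches along a chain, it is constant on the chain. -/
lemma chain_const (P : ℕ → Prop) (a b : ℕ)
    (h : ∀ s, a ≤ s → s < b → (P s ↔ P (s+1))) :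
    ∀ t, a ≤ t → t ≤ b → (P t ↔ P a) := by
  intro t
  induction t with
  | zero =>
    intro h1 _
    have : a = 0 := Nat.le_zero.mp h1
    rw [this]
  | succ t ih =>
    intro h1 h2
    by_cases hat : a = t + 1
    · rw [hat]
    · have ha : a ≤ t := by omega
      exact ((h t ha (by omega)).symm).trans (ih ha (by omega))

/-- Every vertex of the digraph of an `m`-orbit, `m > 2`, has an outgoing edge
to a different vertex and an incoming edge, which may be chosen from a
different vertex unless `m` is even and `2r = m`. -/
theorem digraph_in_out_edges (f : ℝ → ℝ) (hf : Continuous f) (m : ℕ)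
    (hm : 2 < m) (β : ℕ → ℝ) (σ : ℕ → ℕ) (horb : IsOrbitWithPerm f m β σ) :
    ∀ r ∈ Set.Icc 1 (m-1),
      (∃ r'' ∈ Set.Icc 1 (m-1), r'' ≠ r ∧ HasEdge σ r r'') ∧
      (∃ r' ∈ Set.Icc 1 (m-1), HasEdge σ r' r) ∧
      (¬ (Even m ∧ 2*r = m) →
        ∃ r' ∈ Set.Icc 1 (m-1), r' ≠ r ∧ HasEdge σ r' r) := by
  obtain ⟨hmono, hper, ⟨hmaps, hinj, hsurj⟩, hcomm⟩ := horb
  intro r hr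
  rw [Set.mem_Icc] at hr
  have hrm : r ∈ Set.Icc 1 m := Set.mem_Icc.mpr (by omega)
  have hr1m : r + 1 ∈ Set.Icc 1 m := Set.mem_Icc.mpr (by omega)
  have hσr := Set.mem_Icc.mp (hmaps hrm)
  have hσr1 := Set.mem_Icc.mp (hmaps hr1m)
  -- σ has no fixed points
  have hfix : ∀ t ∈ Set.Icc 1 m, σ t ≠ t := by
    intro t ht heq
    have h1 : f (β t) = β t := by rw [hcomm t ht, heq]
    have h2 := (hper t ht).2 1 le_rfl (by omega)
    rw [Function.iterate_one] at h2
    exact h2 h1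
  -- σ has no 2-cycle on {r, r+1}
  have hno2 : ¬ (σ r = r + 1 ∧ σ (r+1) = r) := by
    rintro ⟨h1, h2⟩
    have hit : f^[2] (β r) = β r := by
      rw [show (2:ℕ) = 1 + 1 from rfl, Function.iterate_add_apply]
      simp only [Function.iterate_one]
      rw [hcomm r hrm, h1, hcomm (r+1) hr1m, h2]
    exact (hper r hrm).2 2 (by omega) (by omega) hit
  have hne : σ r ≠ σ (r+1) := fun h => by
    have := hinj hrm hr1m h; omega
  refine ⟨?_, ?_, ?_⟩
  · -- (a) outgoing edge to a different vertex
    by_cases hmin : min (σ r) (σ (r+1)) = r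
    · have h1 : σ (r+1) = r := by have := hfix r hrm; omega
      have h2 : σ r ≠ r + 1 := fun h => hno2 ⟨h, h1⟩
      refine ⟨r+1, Set.mem_Icc.mpr (by omega), by omega, by
        constructor <;> omega⟩
    · refine ⟨min (σ r) (σ (r+1)), Set.mem_Icc.mpr (by omega), hmin, by
        constructor <;> omega⟩
  · -- (b) incoming edge
    obtain ⟨ta, hta, hσta⟩ := hsurj hrm
    have hmm : m ∈ Set.Icc 1 m := Set.mem_Icc.mpr (by omega)
    obtain ⟨tb, htb, hσtb⟩ := hsurj hmm
    rw [Set.mem_Icc] at hta htb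
    have hab : ta ≠ tb := by intro h; rw [h, hσtb] at hσta; omega
    rcases Nat.lt_or_ge ta tb with h | h
    · obtain ⟨s, hs1, hs2, hs3, hs4⟩ := cross_lemma (fun t => σ t ≤ r) tb ta
        h.le (by omega) (by show ¬ (σ tb ≤ r); omega)
      rw [Nat.not_le] at hs4
      exact ⟨s, Set.mem_Icc.mpr (by omega), by constructor <;> omega⟩
    · have h' : tb ≤ ta := h
      obtain ⟨s, hs1, hs2, hs3, hs4⟩ := cross_lemma (fun t => ¬ (σ t ≤ r)) ta tb
        h' (by omega) (by simp only [not_not]; omega)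
      rw [not_not] at hs4
      rw [Nat.not_le] at hs3
      exact ⟨s, Set.mem_Icc.mpr (by omega), by constructor <;> omega⟩
  · -- (c) incoming edge from a different vertex
    intro hg
    by_contra hcon
    push_neg at hcon
    have hsame : ∀ s, 1 ≤ s → s ≤ m - 1 → s ≠ r → (σ s ≤ r ↔ σ (s+1) ≤ r) := by
      intro s h1 h2 h3
      have := hcon s (Set.mem_Icc.mpr ⟨h1, h2⟩) h3
      simp only [HasEdge, not_and, not_le] at this
      omega
    have hchain_low : ∀ t, 1 ≤ t → t ≤ r → (σ t ≤ r ↔ σ 1 ≤ r) :=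
      chain_const (fun t => σ t ≤ r) 1 r
        (fun s hs1 hs2 => hsame s hs1 (by omega) (by omega))
    have hchain_high : ∀ t, r + 1 ≤ t → t ≤ m → (σ t ≤ r ↔ σ (r+1) ≤ r) :=
      chain_const (fun t => σ t ≤ r) (r+1) m
        (fun s hs1 hs2 => hsame s (by omega) (by omega) (by omega))
    by_cases hq1 : σ 1 ≤ r
    · by_cases hqr1 : σ (r+1) ≤ r
      · -- all values ≤ r, but m is a value
        have hmm : m ∈ Set.Icc 1 m := Set.mem_Icc.mpr (by omega)
        obtain ⟨tb, htb, hσtb⟩ := hsurj hmm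
        rw [Set.mem_Icc] at htb
        rcases le_or_gt tb r with h | h
        · have := (hchain_low tb (by omega) h).mpr hq1; omega
        · have := (hchain_high tb (by omega) (by omega)).mpr hqr1; omega
      · -- σ maps [1,r] into [1,r] : contradiction with exact period m
        have hinv : ∀ t ∈ Set.Icc 1 r, σ t ∈ Set.Icc 1 r := by
          intro t ht
          rw [Set.mem_Icc] at ht
          have h1 := Set.mem_Icc.mp (hmaps (Set.mem_Icc.mpr (by omega : 1 ≤ t ∧ t ≤ m)))
          have h2 := (hchain_low t ht.1 ht.2).mpr hq1
          exact Set.mem_Icc.mpr ⟨h1.1, h2⟩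
        have h1m : (1:ℕ) ∈ Set.Icc 1 m := Set.mem_Icc.mpr (by omega)
        have hiter : ∀ k, σ^[k] 1 ∈ Set.Icc 1 r ∧ f^[k] (β 1) = β (σ^[k] 1) := by
          intro k
          induction k with
          | zero =>
            simp only [Function.iterate_zero, id_eq]
            exact ⟨Set.mem_Icc.mpr ⟨le_rfl, hr.1⟩, trivial⟩
          | succ k ih =>
            obtain ⟨hk1, hk2⟩ := ih
            have hkm : σ^[k] 1 ∈ Set.Icc 1 m := by
              rw [Set.mem_Icc] at hk1 ⊢; omega
            constructor
            · rw [Function.iterate_succ_apply']; exact hinv _ hk1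
            · rw [Function.iterate_succ_apply', Function.iterate_succ_apply',
                hk2, hcomm _ hkm]
        have key : ∀ j k, j < k → k < m → σ^[j] 1 = σ^[k] 1 → False := by
          intro j k hjk hkm heq
          have hfj : f^[j] (β 1) = f^[k] (β 1) := by
            rw [(hiter j).2, (hiter k).2, heq]
          have hper1 := hper 1 h1m
          have hret : f^[m - k + j] (β 1) = β 1 := by
            rw [Function.iterate_add_apply, hfj, ← Function.iterate_add_apply,
              Nat.sub_add_cancel hkm.le]
            exact hper1.1
          exact hper1.2 (m - k + j) (by omega) (by omega) hret
        have hcard : (Finset.Icc 1 r).card < (Finset.range m).card := by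
          rw [Nat.card_Icc, Finset.card_range]; omega
        obtain ⟨x, hx, y, hy, hxy, hfeq⟩ :=
          Finset.exists_ne_map_eq_of_card_lt_of_maps_to hcard
            (fun a _ => by
              have := (hiter a).1
              rw [Set.mem_Icc] at this
              exact Finset.mem_Icc.mpr this)
        rw [Finset.mem_range] at hx hy
        rcases hxy.lt_or_gt with h | h
        · exact key x y h hy hfeq
        · exact key y x h hx hfeq.symm
    · by_cases hqr1 : σ (r+1) ≤ r
      · -- σ swaps [1,r] and [r+1,m] : forces m = 2r
        have hlow : ∀ a ∈ Finset.Icc 1 r, σ a ∈ Finset.Icc (r+1) m := by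
          intro a ha
          rw [Finset.mem_Icc] at ha
          have h1 := Set.mem_Icc.mp (hmaps (Set.mem_Icc.mpr (by omega : 1 ≤ a ∧ a ≤ m)))
          have h2 : ¬ (σ a ≤ r) := fun hc => hq1 ((hchain_low a ha.1 ha.2).mp hc)
          exact Finset.mem_Icc.mpr (by omega)
        have hhigh : ∀ a ∈ Finset.Icc (r+1) m, σ a ∈ Finset.Icc 1 r := by
          intro a ha
          rw [Finset.mem_Icc] at ha
          have h1 := Set.mem_Icc.mp (hmaps (Set.mem_Icc.mpr (by omega : 1 ≤ a ∧ a ≤ m)))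
          have h2 : σ a ≤ r := (hchain_high a ha.1 ha.2).mpr hqr1
          exact Finset.mem_Icc.mpr (by omega)
        have hsub1 : ↑(Finset.Icc 1 r) ⊆ Set.Icc 1 m := by
          rw [Finset.coe_Icc]; exact Set.Icc_subset_Icc_right (by omega)
        have hsub2 : ↑(Finset.Icc (r+1) m) ⊆ Set.Icc 1 m := by
          rw [Finset.coe_Icc]; exact Set.Icc_subset_Icc_left (by omega)
        have hle1 := Finset.card_le_card_of_injOn σ hlow (hinj.mono hsub1)
        have hle2 := Finset.card_le_card_of_injOn σ hhigh (hinj.mono hsub2)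
        rw [Nat.card_Icc, Nat.card_Icc] at hle1 hle2
        exact hg ⟨⟨r, by omega⟩, by omega⟩
      · -- all values > r, but r is a value
        obtain ⟨ta, hta, hσta⟩ := hsurj hrm
        rw [Set.mem_Icc] at hta
        rcases le_or_gt ta r with h | h
        · have : ¬ (σ ta ≤ r) := fun hc => hq1 ((hchain_low ta hta.1 h).mp hc)
          omega
        · have : ¬ (σ ta ≤ r) := fun hc =>
            hqr1 ((hchain_high ta (by omega) hta.2).mp hc)
          omega
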